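/- Consider the gray-box process with J : ℝ^p → ℝ both M-Lipschitz and L-smooth, and assume each ε_k is square-integrable. Then for every k ≥ 1, E‖φ̃_k‖² ≤ (4(1 − α_k)² p² M² η² / δ²) E‖φ̃_{k−1}‖² + 8 α_k² E‖∇J(w_k)‖² + 48 (1 − α_k)² p² E‖∇J(w_{k−1})‖² + 4 α_k² E‖ε_k‖² + 8 α_k² L² δ² + 6 (1 − α_k)² L² p² δ², where E denotes expectation over the i.i.d. sphere samples. -/

import Mathlib

open MeasureTheory Metric ProbabilityTheory
/-- The uniform (normalized surface) probability measure on the unit sphere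
`S_{p-1} ⊆ ℝ^p`, viewed as a measure on the ambient space. -/
noncomputable def sphereUniform (p : ℕ) : Measure (EuclideanSpace ℝ (Fin p)) :=
  ((volume : Measure (EuclideanSpace ℝ (Fin p))).toSphere Set.univ)⁻¹ •
    Measure.map Subtype.val (volume : Measure (EuclideanSpace ℝ (Fin p))).toSphere

variable {Ω : Type*}

/-- Auxiliary two-step recursion for the gray-box process: `grayAux … n = (w_{n-1}, w_n)`
in the paper's indexing, where `v n` stands for the paper's exploration sample `v_{n-1}`,
`ε k` for the paper's gradient error `ε_k`, and `wneg`, `w0` are the paper's initial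
points `w_{-1}`, `w_0`. -/
noncomputable def grayAux (p : ℕ) (η δ : ℝ) (J : EuclideanSpace ℝ (Fin p) → ℝ)
    (v : ℕ → Ω → EuclideanSpace ℝ (Fin p)) (ε : ℕ → Ω → EuclideanSpace ℝ (Fin p))
    (α : ℕ → ℝ) (wneg w0 : EuclideanSpace ℝ (Fin p)) :
    ℕ → (Ω → EuclideanSpace ℝ (Fin p)) × (Ω → EuclideanSpace ℝ (Fin p))
  | 0 => (fun _ => wneg, fun _ => w0)
  | (k + 1) =>
      let ih := grayAux p η δ J v ε α wneg w0 k
      (ih.2, fun ω =>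
        ih.2 ω - η • (α k • (gradient J (ih.2 ω + δ • v (k + 1) ω) - ε k ω)
          + (1 - α k) • ((((p : ℝ) / δ) *
              (J (ih.2 ω + δ • v (k + 1) ω) - J (ih.1 ω + δ • v k ω))) • v (k + 1) ω)))

/-- `grayW … n` is the paper's candidate solution `w_{n-1}`; in particular
`grayW … 0 = w_{-1}`, `grayW … 1 = w_0`, and for `k ≥ 0` the paper's `w_{k+1}` is
`grayW … (k+2) = grayW … (k+1) - η φ̃_k`. -/
noncomputable def grayW (p : ℕ) (η δ : ℝ) (J : EuclideanSpace ℝ (Fin p) → ℝ)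
    (v : ℕ → Ω → EuclideanSpace ℝ (Fin p)) (ε : ℕ → Ω → EuclideanSpace ℝ (Fin p))
    (α : ℕ → ℝ) (wneg w0 : EuclideanSpace ℝ (Fin p)) (n : ℕ) :
    Ω → EuclideanSpace ℝ (Fin p) :=
  (grayAux p η δ J v ε α wneg w0 n).1

/-- `grayPhi … k` is the paper's combined update direction
`φ̃_k = α_k (∇J(u_k) - ε_k) + (1 - α_k) (p/δ)(J(u_k) - J(u_{k-1})) v_k`, where
`u_k = w_k + δ v_k` (recall the index shift: the paper's `w_k`, `v_k` are
`grayW … (k+1)`, `v (k+1)`). -/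
noncomputable def grayPhi (p : ℕ) (η δ : ℝ) (J : EuclideanSpace ℝ (Fin p) → ℝ)
    (v : ℕ → Ω → EuclideanSpace ℝ (Fin p)) (ε : ℕ → Ω → EuclideanSpace ℝ (Fin p))
    (α : ℕ → ℝ) (wneg w0 : EuclideanSpace ℝ (Fin p)) (k : ℕ) :
    Ω → EuclideanSpace ℝ (Fin p) := fun ω =>
  α k • (gradient J (grayW p η δ J v ε α wneg w0 (k + 1) ω + δ • v (k + 1) ω) - ε k ω)
    + (1 - α k) • ((((p : ℝ) / δ) *
        (J (grayW p η δ J v ε α wneg w0 (k + 1) ω + δ • v (k + 1) ω)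
          - J (grayW p η δ J v ε α wneg w0 k ω + δ • v k ω))) • v (k + 1) ω)


open InnerProductSpace in
private lemma grayBox_descent_aux {F : Type*} [NormedAddCommGroup F] [InnerProductSpace ℝ F]
    [CompleteSpace F] (J : F → ℝ) (L : ℝ) (hL : 0 ≤ L) (hdiff : Differentiable ℝ J)
    (hlip : LipschitzWith L.toNNReal (fun x => gradient J x)) (x h : F) :
    J (x + h) - J x - ⟪gradient J x, h⟫_ℝ ≤ L / 2 * ‖h‖ ^ 2 := by
  set g : F → ℝ := fun y => ⟪gradient J y, h⟫_ℝ with hg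
  have hfd : ∀ y : F, fderiv ℝ J y h = g y := by
    intro y
    simp [g, gradient, real_inner_comm]
  have hc : ∀ t : ℝ, HasDerivAt (fun t : ℝ => x + t • h) h t := by
    intro t
    simpa using ((hasDerivAt_id t).smul_const h).const_add x
  have hu : ∀ t : ℝ, HasDerivAt
      (fun t : ℝ => J (x + t • h) - J x - t * g x - L / 2 * t ^ 2 * ‖h‖ ^ 2)
      (g (x + t • h) - g x - L * t * ‖h‖ ^ 2) t := by
    intro t
    have h1 : HasDerivAt (fun t : ℝ => J (x + t • h)) (g (x + t • h)) t := by
      have := (hdiff (x + t • h)).hasFDerivAt.comp_hasDerivAt t (hc t)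
      rw [hfd] at this
      exact this
    have h2 : HasDerivAt (fun t : ℝ => t * g x) (g x) t := by
      simpa using (hasDerivAt_id t).mul_const (g x)
    have h3 : HasDerivAt (fun t : ℝ => L / 2 * t ^ 2 * ‖h‖ ^ 2) (L * t * ‖h‖ ^ 2) t := by
      have h4 : HasDerivAt (fun t : ℝ => t ^ 2) (2 * t) t := by
        simpa using hasDerivAt_pow 2 t
      have := ((h4.const_mul (L / 2)).mul_const (‖h‖ ^ 2))
      exact this.congr_deriv (by ring)
    have := ((h1.sub_const (J x)).sub h2).sub h3
    exact this
  have hanti : AntitoneOn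
      (fun t : ℝ => J (x + t • h) - J x - t * g x - L / 2 * t ^ 2 * ‖h‖ ^ 2)
      (Set.Icc 0 1) := by
    apply antitoneOn_of_deriv_nonpos (convex_Icc 0 1)
    · exact fun t _ => ((hu t).differentiableAt).continuousAt.continuousWithinAt
    · intro t ht
      exact (hu t).differentiableAt.differentiableWithinAt
    · intro t ht
      rw [(hu t).deriv]
      have ht0 : 0 < t := (Set.mem_Ioo.mp (by simpa using ht)).1
      have hb : g (x + t • h) - g x ≤ L * t * ‖h‖ ^ 2 := by
        have h1 : g (x + t • h) - g x = ⟪gradient J (x + t • h) - gradient J x, h⟫_ℝ := by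
          simp [g, inner_sub_left]
        rw [h1]
        calc ⟪gradient J (x + t • h) - gradient J x, h⟫_ℝ
            ≤ ‖gradient J (x + t • h) - gradient J x‖ * ‖h‖ := real_inner_le_norm _ _
          _ ≤ (L * ‖t • h‖) * ‖h‖ := by
              apply mul_le_mul_of_nonneg_right _ (norm_nonneg _)
              have := hlip.dist_le_mul (x + t • h) x
              simpa [dist_eq_norm, Real.coe_toNNReal L hL] using this
          _ = L * t * ‖h‖ ^ 2 := by
              rw [norm_smul]
              simp [abs_of_pos ht0]
              ring
      linarith
  have h01 : (0:ℝ) ∈ Set.Icc (0:ℝ) 1 := by norm_num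
  have h11 : (1:ℝ) ∈ Set.Icc (0:ℝ) 1 := by norm_num
  have := hanti h01 h11 zero_le_one
  simp only [zero_smul, add_zero, one_smul, zero_mul, zero_pow, mul_zero, sub_zero,
    one_pow, mul_one, sub_self, one_mul] at this
  simpa [g] using this

open InnerProductSpace in
private lemma grayBox_descent {F : Type*} [NormedAddCommGroup F] [InnerProductSpace ℝ F]
    [CompleteSpace F] (J : F → ℝ) (L : ℝ) (hL : 0 ≤ L) (hdiff : Differentiable ℝ J)
    (hlip : LipschitzWith L.toNNReal (fun x => gradient J x)) (x h : F) :
    |J (x + h) - J x - ⟪gradient J x, h⟫_ℝ| ≤ L / 2 * ‖h‖ ^ 2 := by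
  have grad_neg : ∀ y : F, gradient (fun z => -J z) y = -gradient J y := by
    intro y
    simp [gradient, fderiv_neg]
  rw [abs_le]
  constructor
  · have hlip' : LipschitzWith L.toNNReal (fun x => gradient (fun z => -J z) x) := by
      have h2 : (fun x => gradient (fun z => -J z) x) = fun x => -(gradient J x) := by
        funext y; exact grad_neg y
      rw [h2]
      exact hlip.neg
    have := grayBox_descent_aux (fun z => -J z) L hL hdiff.neg hlip' x h
    rw [grad_neg] at this
    simp only [inner_neg_left] at this
    linarith
  · exact grayBox_descent_aux J L hL hdiff hlip x h

private lemma grayBox_sq3a (x y z : ℝ) : (x + y + z)^2 ≤ 4*x^2 + 4*y^2 + 2*z^2 := by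
  nlinarith [sq_nonneg (x-y), sq_nonneg (x+y-z), sq_nonneg (x-z), sq_nonneg (y-z)]

private lemma grayBox_sq3b (x y z : ℝ) : (x + y + z)^2 ≤ 2*x^2 + 6*y^2 + 3*z^2 := by
  nlinarith [sq_nonneg (x-y-z), sq_nonneg (2*y-z)]

private lemma grayBox_keyReal (a q M η L δ X Y E G1 G0 Φ Z : ℝ)
    (ha : 0 ≤ a) (hb : 0 ≤ 1 - a) (hq : 0 ≤ q) (hM : 0 ≤ M) (hη : 0 ≤ η) (hL : 0 ≤ L)
    (hδ : 0 ≤ δ) (hE : 0 ≤ E) (hG1 : 0 ≤ G1) (hG0 : 0 ≤ G0) (hΦ : 0 ≤ Φ)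
    (hX : 0 ≤ X) (hY : 0 ≤ Y) (hZ0 : 0 ≤ Z)
    (hZ : Z ≤ a * X + (1 - a) * (q * Y))
    (hXb : X ≤ L * δ + G1 + E) (hYb : Y ≤ M * η * Φ + 2 * δ * G0 + L * δ ^ 2) :
    Z ^ 2 ≤ 4 * (1-a)^2 * q^2 * M^2 * η^2 * Φ^2 + 8 * a^2 * G1^2
      + 48 * (1-a)^2 * q^2 * δ^2 * G0^2 + 4 * a^2 * E^2 + 8 * a^2 * L^2 * δ^2
      + 6 * (1-a)^2 * q^2 * L^2 * δ^4 := by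
  have h1 : Z ^ 2 ≤ (a * X + (1 - a) * (q * Y)) ^ 2 := by
    apply pow_le_pow_left₀ hZ0 hZ
  have h2 : (a * X + (1 - a) * (q * Y)) ^ 2 ≤ 2 * a^2 * X^2 + 2 * (1-a)^2 * q^2 * Y^2 := by
    nlinarith [sq_nonneg (a * X - (1 - a) * (q * Y))]
  have h3 : X ^ 2 ≤ 4 * (L*δ)^2 + 4 * G1^2 + 2 * E^2 := by
    have := grayBox_sq3a (L*δ) G1 E
    nlinarith [pow_le_pow_left₀ hX hXb 2]
  have h4 : Y ^ 2 ≤ 2 * (M*η*Φ)^2 + 6 * (2*δ*G0)^2 + 3 * (L*δ^2)^2 := by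
    have := grayBox_sq3b (M*η*Φ) (2*δ*G0) (L*δ^2)
    nlinarith [pow_le_pow_left₀ hY hYb 2]
  have ha2 : (0:ℝ) ≤ 2 * a^2 := by positivity
  have hb2 : (0:ℝ) ≤ 2 * (1-a)^2 * q^2 := by positivity
  have h5 := mul_le_mul_of_nonneg_left h3 ha2
  have h6 := mul_le_mul_of_nonneg_left h4 hb2
  ring_nf at h5 h6 ⊢
  linarith [h1, h2, h5, h6]

private lemma grayBox_ae_norm_one (p : ℕ) {Ω : Type*} [MeasurableSpace Ω] (P : Measure Ω)
    (f : Ω → EuclideanSpace ℝ (Fin p)) (hf : Measurable f)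
    (hd : Measure.map f P = sphereUniform p) : ∀ᵐ ω ∂P, ‖f ω‖ = 1 := by
  have hs : MeasurableSet {x : EuclideanSpace ℝ (Fin p) | ‖x‖ = 1} :=
    (isClosed_eq continuous_norm continuous_const).measurableSet
  have h0 : P {ω | ¬ ‖f ω‖ = 1} = 0 := by
    have h1 : P (f ⁻¹' {x | ‖x‖ = 1}ᶜ) = Measure.map f P {x | ‖x‖ = 1}ᶜ :=
      (Measure.map_apply hf hs.compl).symm
    rw [show {ω | ¬ ‖f ω‖ = 1} = f ⁻¹' {x | ‖x‖ = 1}ᶜ from rfl, h1, hd]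
    rw [sphereUniform, Measure.smul_apply,
      Measure.map_apply measurable_subtype_coe hs.compl]
    have h2 : (Subtype.val ⁻¹' {x : EuclideanSpace ℝ (Fin p) | ‖x‖ = 1}ᶜ :
        Set (sphere (0 : EuclideanSpace ℝ (Fin p)) 1)) = ∅ := by
      ext y
      simp only [Set.mem_preimage, Set.mem_compl_iff, Set.mem_setOf_eq, Set.mem_empty_iff_false,
        iff_false, not_not]
      simpa using mem_sphere_zero_iff_norm.mp y.2
    rw [h2]
    simp
  exact h0

section GrayBoxAux

variable {Ω : Type*} [MeasurableSpace Ω] {p : ℕ} {η δ : ℝ}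
  {J : EuclideanSpace ℝ (Fin p) → ℝ}
  {v ε : ℕ → Ω → EuclideanSpace ℝ (Fin p)} {α : ℕ → ℝ}
  {wneg w0 : EuclideanSpace ℝ (Fin p)}

private lemma grayBox_meas_grayAux (hJ : Continuous J)
    (hg : Continuous (fun x => gradient J x))
    (hv : ∀ n, Measurable (v n)) (hε : ∀ k, Measurable (ε k)) :
    ∀ n, Measurable (grayAux p η δ J v ε α wneg w0 n).1 ∧
      Measurable (grayAux p η δ J v ε α wneg w0 n).2 := by
  intro n
  induction n with
  | zero => exact ⟨measurable_const, measurable_const⟩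
  | succ k ih =>
    refine ⟨ih.2, ?_⟩
    show Measurable fun ω =>
      (grayAux p η δ J v ε α wneg w0 k).2 ω - η • (α k • (gradient J
          ((grayAux p η δ J v ε α wneg w0 k).2 ω + δ • v (k + 1) ω) - ε k ω)
        + (1 - α k) • ((((p : ℝ) / δ) *
            (J ((grayAux p η δ J v ε α wneg w0 k).2 ω + δ • v (k + 1) ω)
              - J ((grayAux p η δ J v ε α wneg w0 k).1 ω + δ • v k ω))) • v (k + 1) ω))
    have h1 : Measurable fun ω => (grayAux p η δ J v ε α wneg w0 k).2 ω + δ • v (k+1) ω :=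
      ih.2.add ((hv (k+1)).const_smul δ)
    have h0 : Measurable fun ω => (grayAux p η δ J v ε α wneg w0 k).1 ω + δ • v k ω :=
      ih.1.add ((hv k).const_smul δ)
    apply ih.2.sub
    apply Measurable.fun_const_smul
    apply Measurable.add
    · exact ((hg.measurable.comp h1).sub (hε k)).fun_const_smul _
    · apply Measurable.fun_const_smul
      exact (((hJ.measurable.comp h1).sub (hJ.measurable.comp h0)).const_mul _).smul (hv (k+1))

private lemma grayBox_meas_grayW (hJ : Continuous J)
    (hg : Continuous (fun x => gradient J x))
    (hv : ∀ n, Measurable (v n)) (hε : ∀ k, Measurable (ε k)) (n : ℕ) :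
    Measurable (grayW p η δ J v ε α wneg w0 n) :=
  (grayBox_meas_grayAux hJ hg hv hε n).1

private lemma grayBox_meas_grayPhi (hJ : Continuous J)
    (hg : Continuous (fun x => gradient J x))
    (hv : ∀ n, Measurable (v n)) (hε : ∀ k, Measurable (ε k)) (k : ℕ) :
    Measurable (grayPhi p η δ J v ε α wneg w0 k) := by
  unfold grayPhi
  have h1 : Measurable fun ω => grayW p η δ J v ε α wneg w0 (k+1) ω + δ • v (k+1) ω :=
    (grayBox_meas_grayW hJ hg hv hε (k+1)).add ((hv (k+1)).const_smul δ)
  have h0 : Measurable fun ω => grayW p η δ J v ε α wneg w0 k ω + δ • v k ω :=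
    (grayBox_meas_grayW hJ hg hv hε k).add ((hv k).const_smul δ)
  apply Measurable.add
  · exact ((hg.measurable.comp h1).sub (hε k)).fun_const_smul _
  · apply Measurable.fun_const_smul
    exact (((hJ.measurable.comp h1).sub (hJ.measurable.comp h0)).const_mul _).smul (hv (k+1))

omit [MeasurableSpace Ω] in
private lemma grayBox_grayW_succ_succ (k : ℕ) :
    grayW p η δ J v ε α wneg w0 (k + 2)
      = fun ω => grayW p η δ J v ε α wneg w0 (k + 1) ω
          - η • grayPhi p η δ J v ε α wneg w0 k ω := rfl

end GrayBoxAux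

section GrayBoxLp

variable {Ω : Type*} [MeasurableSpace Ω] {p : ℕ} {η δ : ℝ}
  {J : EuclideanSpace ℝ (Fin p) → ℝ}
  {v ε : ℕ → Ω → EuclideanSpace ℝ (Fin p)} {α : ℕ → ℝ}
  {wneg w0 : EuclideanSpace ℝ (Fin p)}

private lemma grayBox_memLp_step {M : ℝ} (hδ : 0 < δ) (hM : 0 ≤ M)
    (hJ : Continuous J) (hg : Continuous (fun x => gradient J x))
    (hgradbd : ∀ x, ‖gradient J x‖ ≤ M)
    (hJlipabs : ∀ x y, |J x - J y| ≤ M * ‖x - y‖)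
    (P : Measure Ω) [IsProbabilityMeasure P]
    (hv : ∀ n, Measurable (v n)) (hε : ∀ k, Measurable (ε k))
    (hvnorm : ∀ n, ∀ᵐ ω ∂P, ‖v n ω‖ = 1)
    (hεL2 : ∀ k, MemLp (ε k) 2 P)
    (hα : ∀ k, α k ∈ Set.Icc (0:ℝ) 1)
    (k : ℕ) (D : Ω → ℝ) (hD : ∀ ω, 0 ≤ D ω) (hDLp : MemLp D 2 P)
    (hDeq : ∀ ω, ‖grayW p η δ J v ε α wneg w0 (k+1) ω
        - grayW p η δ J v ε α wneg w0 k ω‖ ≤ D ω) :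
    MemLp (grayPhi p η δ J v ε α wneg w0 k) 2 P := by
  set G : Ω → ℝ := fun ω => (M + ‖ε k ω‖) + ((p:ℝ)/δ*M) * (D ω + 2*δ) with hGdef
  have hGLp : MemLp G 2 P :=
    ((memLp_const M).add (hεL2 k).norm).add
      ((hDLp.add (memLp_const (2*δ))).const_mul ((p:ℝ)/δ*M))
  refine MemLp.of_le hGLp (grayBox_meas_grayPhi hJ hg hv hε k).aestronglyMeasurable ?_
  filter_upwards [hvnorm k, hvnorm (k+1)] with ω h0 h1
  have ha0 : 0 ≤ α k := (hα k).1
  have ha1 : α k ≤ 1 := (hα k).2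
  set W1 := grayW p η δ J v ε α wneg w0 (k+1) ω with hW1
  set W0 := grayW p η δ J v ε α wneg w0 k ω with hW0
  set u1 : EuclideanSpace ℝ (Fin p) := W1 + δ • v (k+1) ω with hu1
  set u0 : EuclideanSpace ℝ (Fin p) := W0 + δ • v k ω with hu0
  have hqnn : (0:ℝ) ≤ (p:ℝ)/δ := by positivity
  have hDω := hD ω
  have hbig : 0 ≤ ((p:ℝ)/δ*M) * (D ω + 2*δ) :=
    mul_nonneg (by positivity) (by linarith)
  have hGnn : 0 ≤ G ω := by
    have := norm_nonneg (ε k ω)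
    simp only [hGdef]
    linarith
  have hGnorm : ‖G ω‖ = G ω := Real.norm_of_nonneg hGnn
  rw [hGnorm]
  have hA : ‖gradient J u1 - ε k ω‖ ≤ M + ‖ε k ω‖ :=
    (norm_sub_le _ _).trans (add_le_add_left (hgradbd u1) _)
  have hudiff : ‖u1 - u0‖ ≤ D ω + 2*δ := by
    have heq : u1 - u0 = (W1 - W0) + (δ • v (k+1) ω - δ • v k ω) := by
      simp only [hu1, hu0]; abel
    rw [heq]
    have h2 : ‖δ • v (k+1) ω - δ • v k ω‖ ≤ δ * 1 + δ * 1 := by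
      calc ‖δ • v (k+1) ω - δ • v k ω‖ ≤ ‖δ • v (k+1) ω‖ + ‖δ • v k ω‖ := norm_sub_le _ _
        _ = δ * 1 + δ * 1 := by rw [norm_smul, norm_smul, h0, h1, Real.norm_eq_abs,
            abs_of_pos hδ]
    calc ‖(W1 - W0) + (δ • v (k+1) ω - δ • v k ω)‖
        ≤ ‖W1 - W0‖ + ‖δ • v (k+1) ω - δ • v k ω‖ := norm_add_le _ _
      _ ≤ D ω + (δ * 1 + δ * 1) := add_le_add (hDeq ω) h2
      _ = D ω + 2*δ := by ring
  have hc : |(p:ℝ)/δ * (J u1 - J u0)| ≤ (p:ℝ)/δ*M*(D ω + 2*δ) := by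
    rw [abs_mul, abs_of_nonneg hqnn]
    calc (p:ℝ)/δ * |J u1 - J u0| ≤ (p:ℝ)/δ * (M * ‖u1 - u0‖) :=
          mul_le_mul_of_nonneg_left (hJlipabs u1 u0) hqnn
      _ ≤ (p:ℝ)/δ * (M * (D ω + 2*δ)) := by
          apply mul_le_mul_of_nonneg_left _ hqnn
          exact mul_le_mul_of_nonneg_left hudiff hM
      _ = (p:ℝ)/δ*M*(D ω + 2*δ) := by ring
  have hn : ‖grayPhi p η δ J v ε α wneg w0 k ω‖
      ≤ |α k| * ‖gradient J u1 - ε k ω‖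
        + |1 - α k| * (|(p:ℝ)/δ * (J u1 - J u0)| * ‖v (k+1) ω‖) := by
    calc ‖grayPhi p η δ J v ε α wneg w0 k ω‖
        = ‖α k • (gradient J u1 - ε k ω)
            + (1 - α k) • (((p:ℝ)/δ * (J u1 - J u0)) • v (k+1) ω)‖ := rfl
      _ ≤ ‖α k • (gradient J u1 - ε k ω)‖
          + ‖(1 - α k) • (((p:ℝ)/δ * (J u1 - J u0)) • v (k+1) ω)‖ := norm_add_le _ _
      _ = |α k| * ‖gradient J u1 - ε k ω‖
          + |1 - α k| * (|(p:ℝ)/δ * (J u1 - J u0)| * ‖v (k+1) ω‖) := by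
          rw [norm_smul, norm_smul, norm_smul]
          simp only [Real.norm_eq_abs]
  have t1 : |α k| * ‖gradient J u1 - ε k ω‖ ≤ M + ‖ε k ω‖ := by
    rw [abs_of_nonneg ha0]
    calc α k * ‖gradient J u1 - ε k ω‖ ≤ 1 * (M + ‖ε k ω‖) :=
          mul_le_mul ha1 hA (norm_nonneg _) zero_le_one
      _ = M + ‖ε k ω‖ := one_mul _
  have t2 : |1 - α k| * (|(p:ℝ)/δ * (J u1 - J u0)| * ‖v (k+1) ω‖)
      ≤ (p:ℝ)/δ*M*(D ω + 2*δ) := by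
    rw [abs_of_nonneg (by linarith : (0:ℝ) ≤ 1 - α k), h1, mul_one]
    calc (1 - α k) * |(p:ℝ)/δ * (J u1 - J u0)| ≤ 1 * ((p:ℝ)/δ*M*(D ω + 2*δ)) :=
          mul_le_mul (by linarith) hc (abs_nonneg _) zero_le_one
      _ = (p:ℝ)/δ*M*(D ω + 2*δ) := one_mul _
  calc ‖grayPhi p η δ J v ε α wneg w0 k ω‖
      ≤ |α k| * ‖gradient J u1 - ε k ω‖
        + |1 - α k| * (|(p:ℝ)/δ * (J u1 - J u0)| * ‖v (k+1) ω‖) := hn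
    _ ≤ (M + ‖ε k ω‖) + ((p:ℝ)/δ*M) * (D ω + 2*δ) := by
        have := t2
        have h3 : (p:ℝ)/δ*M*(D ω + 2*δ) = ((p:ℝ)/δ*M) * (D ω + 2*δ) := by ring
        linarith [t1, t2]
    _ = G ω := rfl

private lemma grayBox_memLp_grayPhi {M : ℝ} (hδ : 0 < δ) (hM : 0 ≤ M)
    (hJ : Continuous J) (hg : Continuous (fun x => gradient J x))
    (hgradbd : ∀ x, ‖gradient J x‖ ≤ M)
    (hJlipabs : ∀ x y, |J x - J y| ≤ M * ‖x - y‖)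
    (P : Measure Ω) [IsProbabilityMeasure P]
    (hv : ∀ n, Measurable (v n)) (hε : ∀ k, Measurable (ε k))
    (hvnorm : ∀ n, ∀ᵐ ω ∂P, ‖v n ω‖ = 1)
    (hεL2 : ∀ k, MemLp (ε k) 2 P)
    (hα : ∀ k, α k ∈ Set.Icc (0:ℝ) 1) :
    ∀ k, MemLp (grayPhi p η δ J v ε α wneg w0 k) 2 P := by
  intro k
  induction k with
  | zero =>
    refine grayBox_memLp_step hδ hM hJ hg hgradbd hJlipabs P hv hε hvnorm hεL2 hα 0
      (fun _ => ‖w0 - wneg‖) (fun _ => norm_nonneg _) (memLp_const _) ?_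
    intro ω
    exact le_of_eq rfl
  | succ m ih =>
    refine grayBox_memLp_step hδ hM hJ hg hgradbd hJlipabs P hv hε hvnorm hεL2 hα (m+1)
      (fun ω => |η| * ‖grayPhi p η δ J v ε α wneg w0 m ω‖)
      (fun ω => by positivity) (ih.norm.const_mul |η|) ?_
    intro ω
    have heq : grayW p η δ J v ε α wneg w0 (m+2) ω
        = grayW p η δ J v ε α wneg w0 (m+1) ω - η • grayPhi p η δ J v ε α wneg w0 m ω := by
      rw [grayBox_grayW_succ_succ]
    rw [heq]
    rw [sub_sub_cancel_left, norm_neg, norm_smul, Real.norm_eq_abs]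

end GrayBoxLp

set_option maxHeartbeats 1000000 in
open InnerProductSpace in
private lemma grayBox_pointwise {F : Type*} [NormedAddCommGroup F] [InnerProductSpace ℝ F]
    [CompleteSpace F] (J : F → ℝ) (M L : ℝ) (hM : 0 ≤ M) (hL : 0 ≤ L)
    (hdiff : Differentiable ℝ J)
    (hglip : LipschitzWith L.toNNReal (fun x => gradient J x))
    (hgradbd : ∀ x, ‖gradient J x‖ ≤ M)
    (hJlipabs : ∀ x y, |J x - J y| ≤ M * ‖x - y‖)
    (hgradlipabs : ∀ x y, ‖gradient J x - gradient J y‖ ≤ L * ‖x - y‖)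
    (p δ η a : ℝ) (hp : 0 ≤ p) (hδ : 0 < δ) (hη : 0 ≤ η) (ha0 : 0 ≤ a) (ha1 : a ≤ 1)
    (W1 V2 V1 φprev e : F) (hv2 : ‖V2‖ = 1) (hv1 : ‖V1‖ = 1) :
    ‖a • (gradient J ((W1 - η • φprev) + δ • V2) - e)
      + (1 - a) • ((p/δ * (J ((W1 - η • φprev) + δ • V2) - J (W1 + δ • V1))) • V2)‖^2
    ≤ (4*(1-a)^2/δ^2) * p^2 * M^2 * η^2 * ‖φprev‖^2
      + 8*a^2*‖gradient J (W1 - η • φprev)‖^2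
      + 48*(1-a)^2*p^2*‖gradient J W1‖^2
      + 4*a^2*‖e‖^2 + 8*a^2*L^2*δ^2 + 6*(1-a)^2*L^2*p^2*δ^2 := by
  have hq : (0:ℝ) ≤ p/δ := by positivity
  have hb0 : (0:ℝ) ≤ 1 - a := by linarith
  set W2 : F := W1 - η • φprev with hW2
  set u1 : F := W2 + δ • V2 with hu1
  set u0 : F := W1 + δ • V1 with hu0
  have hnδV2 : ‖δ • V2‖ = δ := by
    rw [norm_smul, hv2, Real.norm_eq_abs, abs_of_pos hδ, mul_one]
  have hnδV1 : ‖δ • V1‖ = δ := by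
    rw [norm_smul, hv1, Real.norm_eq_abs, abs_of_pos hδ, mul_one]
  have hZ : ‖a • (gradient J u1 - e) + (1 - a) • ((p/δ * (J u1 - J u0)) • V2)‖
      ≤ a * ‖gradient J u1 - e‖ + (1 - a) * (p/δ * |J u1 - J u0|) := by
    calc ‖a • (gradient J u1 - e) + (1 - a) • ((p/δ * (J u1 - J u0)) • V2)‖
        ≤ ‖a • (gradient J u1 - e)‖ + ‖(1 - a) • ((p/δ * (J u1 - J u0)) • V2)‖ :=
          norm_add_le _ _
      _ = |a| * ‖gradient J u1 - e‖ + |1 - a| * (|p/δ * (J u1 - J u0)| * ‖V2‖) := by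
          rw [norm_smul, norm_smul, norm_smul]
          simp only [Real.norm_eq_abs]
      _ = a * ‖gradient J u1 - e‖ + (1 - a) * (p/δ * |J u1 - J u0|) := by
          rw [abs_of_nonneg ha0, abs_of_nonneg hb0, hv2, mul_one, abs_mul,
            abs_of_nonneg hq]
  have hXb : ‖gradient J u1 - e‖ ≤ L*δ + ‖gradient J W2‖ + ‖e‖ := by
    have hsplit : gradient J u1 - e = (gradient J u1 - gradient J W2) + (gradient J W2 - e) := by
      abel
    have h1 : ‖gradient J u1 - gradient J W2‖ ≤ L * δ := by
      have := hgradlipabs u1 W2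
      rwa [show u1 - W2 = δ • V2 from add_sub_cancel_left W2 (δ • V2), hnδV2] at this
    calc ‖gradient J u1 - e‖
        = ‖(gradient J u1 - gradient J W2) + (gradient J W2 - e)‖ := by rw [← hsplit]
      _ ≤ ‖gradient J u1 - gradient J W2‖ + ‖gradient J W2 - e‖ := norm_add_le _ _
      _ ≤ L*δ + (‖gradient J W2‖ + ‖e‖) := add_le_add h1 (norm_sub_le _ _)
      _ = L*δ + ‖gradient J W2‖ + ‖e‖ := by ring
  have hYb : |J u1 - J u0| ≤ M*η*‖φprev‖ + 2*δ*‖gradient J W1‖ + L*δ^2 := by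
    have s1 : |J u1 - J (W1 + δ • V2)| ≤ M*η*‖φprev‖ := by
      have hd : u1 - (W1 + δ • V2) = -(η • φprev) := by
        simp only [hu1, hW2]; abel
      calc |J u1 - J (W1 + δ • V2)| ≤ M * ‖u1 - (W1 + δ • V2)‖ := hJlipabs _ _
        _ = M*η*‖φprev‖ := by
            rw [hd, norm_neg, norm_smul, Real.norm_eq_abs, abs_of_nonneg hη]; ring
    have d1 := grayBox_descent J L hL hdiff hglip W1 (δ • V2)
    have d2 := grayBox_descent J L hL hdiff hglip W1 (δ • V1)
    rw [hnδV2] at d1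
    rw [hnδV1] at d2
    have i1 : |⟪gradient J W1, δ • V2⟫_ℝ| ≤ ‖gradient J W1‖ * δ := by
      calc |⟪gradient J W1, δ • V2⟫_ℝ| ≤ ‖gradient J W1‖ * ‖δ • V2‖ :=
            abs_real_inner_le_norm _ _
        _ = ‖gradient J W1‖ * δ := by rw [hnδV2]
    have i2 : |⟪gradient J W1, δ • V1⟫_ℝ| ≤ ‖gradient J W1‖ * δ := by
      calc |⟪gradient J W1, δ • V1⟫_ℝ| ≤ ‖gradient J W1‖ * ‖δ • V1‖ :=
            abs_real_inner_le_norm _ _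
        _ = ‖gradient J W1‖ * δ := by rw [hnδV1]
    have s2 : |J (W1 + δ • V2) - J u0| ≤ 2*δ*‖gradient J W1‖ + L*δ^2 := by
      have e1 := abs_le.mp d1
      have e2 := abs_le.mp d2
      have e3 := abs_le.mp i1
      have e4 := abs_le.mp i2
      rw [abs_le]
      constructor
      · simp only [hu0]; linarith [e1.1, e1.2, e2.1, e2.2, e3.1, e3.2, e4.1, e4.2]
      · simp only [hu0]; linarith [e1.1, e1.2, e2.1, e2.2, e3.1, e3.2, e4.1, e4.2]
    calc |J u1 - J u0| ≤ |J u1 - J (W1 + δ • V2)| + |J (W1 + δ • V2) - J u0| :=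
          abs_sub_le _ _ _
      _ ≤ M*η*‖φprev‖ + (2*δ*‖gradient J W1‖ + L*δ^2) := add_le_add s1 s2
      _ = M*η*‖φprev‖ + 2*δ*‖gradient J W1‖ + L*δ^2 := by ring
  have key := grayBox_keyReal a (p/δ) M η L δ (‖gradient J u1 - e‖) (|J u1 - J u0|)
    (‖e‖) (‖gradient J W2‖) (‖gradient J W1‖) (‖φprev‖)
    (‖a • (gradient J u1 - e) + (1 - a) • ((p/δ * (J u1 - J u0)) • V2)‖)
    ha0 hb0 hq hM hη hL hδ.le (norm_nonneg _) (norm_nonneg _) (norm_nonneg _)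
    (norm_nonneg _) (norm_nonneg _) (abs_nonneg _) (norm_nonneg _) hZ hXb hYb
  have hδne : δ ≠ 0 := hδ.ne'
  calc ‖a • (gradient J u1 - e) + (1 - a) • ((p/δ * (J u1 - J u0)) • V2)‖^2
      ≤ 4 * (1-a)^2 * (p/δ)^2 * M^2 * η^2 * ‖φprev‖^2 + 8 * a^2 * ‖gradient J W2‖^2
        + 48 * (1-a)^2 * (p/δ)^2 * δ^2 * ‖gradient J W1‖^2 + 4 * a^2 * ‖e‖^2
        + 8 * a^2 * L^2 * δ^2 + 6 * (1-a)^2 * (p/δ)^2 * L^2 * δ^4 := key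
    _ = (4*(1-a)^2/δ^2) * p^2 * M^2 * η^2 * ‖φprev‖^2
        + 8*a^2*‖gradient J W2‖^2
        + 48*(1-a)^2*p^2*‖gradient J W1‖^2
        + 4*a^2*‖e‖^2 + 8*a^2*L^2*δ^2 + 6*(1-a)^2*L^2*p^2*δ^2 := by
        field_simp
set_option maxHeartbeats 1000000 in
/-- Second-moment recursion for the gray-box update direction (the paper's Lemma 3):
for every `k ≥ 1`,
`E‖φ̃_k‖² ≤ (4(1-α_k)² p² M² η²/δ²) E‖φ̃_{k-1}‖² + 8 α_k² E‖∇J(w_k)‖²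
  + 48 (1-α_k)² p² E‖∇J(w_{k-1})‖² + 4 α_k² E‖ε_k‖² + 8 α_k² L² δ²
  + 6 (1-α_k)² L² p² δ²`. -/
theorem grayBox_second_moment_recursion
    (p : ℕ) (hp : 0 < p) (η δ : ℝ) (hη : 0 < η) (hδ : 0 < δ)
    (J : EuclideanSpace ℝ (Fin p) → ℝ) (M L : ℝ) (hM : 0 ≤ M) (hL : 0 ≤ L)
    (hJlip : LipschitzWith M.toNNReal J) (hdiff : Differentiable ℝ J)
    (hglip : LipschitzWith L.toNNReal (fun x => gradient J x))
    [MeasurableSpace Ω] (P : Measure Ω) [IsProbabilityMeasure P]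
    (v : ℕ → Ω → EuclideanSpace ℝ (Fin p)) (hvmeas : ∀ n, Measurable (v n))
    (hiid : iIndepFun v P)
    (hdist : ∀ n, Measure.map (v n) P = sphereUniform p)
    (wneg w0 : EuclideanSpace ℝ (Fin p))
    (α : ℕ → ℝ) (hα : ∀ k, α k ∈ Set.Icc (0 : ℝ) 1)
    (ε : ℕ → Ω → EuclideanSpace ℝ (Fin p))
    (hεmeas : ∀ k : ℕ,
      Measurable[MeasurableSpace.comap (fun ω => (fun i : Fin (k + 2) => v i ω))
        inferInstance] (ε k))
    (hεL2 : ∀ k, MemLp (ε k) 2 P) :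
    ∀ k : ℕ, 1 ≤ k →
      ∫ ω, ‖grayPhi p η δ J v ε α wneg w0 k ω‖ ^ 2 ∂P
        ≤ (4 * (1 - α k) ^ 2 / δ ^ 2) * (p : ℝ) ^ 2 * M ^ 2 * η ^ 2
              * ∫ ω, ‖grayPhi p η δ J v ε α wneg w0 (k - 1) ω‖ ^ 2 ∂P
          + 8 * α k ^ 2 * ∫ ω, ‖gradient J (grayW p η δ J v ε α wneg w0 (k + 1) ω)‖ ^ 2 ∂P
          + 48 * (1 - α k) ^ 2 * (p : ℝ) ^ 2
              * ∫ ω, ‖gradient J (grayW p η δ J v ε α wneg w0 k ω)‖ ^ 2 ∂P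
          + 4 * α k ^ 2 * ∫ ω, ‖ε k ω‖ ^ 2 ∂P
          + 8 * α k ^ 2 * L ^ 2 * δ ^ 2
          + 6 * (1 - α k) ^ 2 * L ^ 2 * (p : ℝ) ^ 2 * δ ^ 2 := by
  intro k hk
  obtain ⟨j, rfl⟩ : ∃ j, k = j + 1 := ⟨k - 1, (Nat.succ_pred_eq_of_pos hk).symm⟩
  simp only [Nat.add_sub_cancel]
  have hJcont : Continuous J := hJlip.continuous
  have hgcont : Continuous (fun x => gradient J x) := hglip.continuous
  have hεm : ∀ i, Measurable (ε i) := by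
    intro i
    have hfm : Measurable (fun ω => (fun t : Fin (i+2) => v t ω)) :=
      measurable_pi_lambda _ (fun t => hvmeas t)
    exact (hεmeas i).mono (measurable_iff_comap_le.mp hfm) le_rfl
  have hgradbd : ∀ x, ‖gradient J x‖ ≤ M := by
    intro x
    have h1 : ‖gradient J x‖ = ‖fderiv ℝ J x‖ := by
      rw [gradient]
      exact LinearIsometryEquiv.norm_map _ _
    rw [h1]
    have := norm_fderiv_le_of_lipschitz ℝ hJlip (x₀ := x)
    simpa [Real.coe_toNNReal M hM] using this
  have hJlipabs : ∀ x y, |J x - J y| ≤ M * ‖x - y‖ := fun x y => by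
    simpa [Real.dist_eq, dist_eq_norm, Real.coe_toNNReal M hM] using hJlip.dist_le_mul x y
  have hgradlipabs : ∀ x y, ‖gradient J x - gradient J y‖ ≤ L * ‖x - y‖ := fun x y => by
    simpa [dist_eq_norm, Real.coe_toNNReal L hL] using hglip.dist_le_mul x y
  have hvnorm : ∀ n, ∀ᵐ ω ∂P, ‖v n ω‖ = 1 := fun n =>
    grayBox_ae_norm_one p P (v n) (hvmeas n) (hdist n)
  have hφLp : ∀ i, MemLp (grayPhi p η δ J v ε α wneg w0 i) 2 P :=
    grayBox_memLp_grayPhi hδ hM hJcont hgcont hgradbd hJlipabs P hvmeas hεm hvnorm hεL2 hα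
  have sqInt : ∀ {f : Ω → EuclideanSpace ℝ (Fin p)}, MemLp f 2 P →
      Integrable (fun ω => ‖f ω‖^2) P := by
    intro f hf
    have h := hf.integrable_norm_rpow two_ne_zero ENNReal.ofNat_ne_top
    have heq : (fun ω => ‖f ω‖ ^ ((2:ENNReal)).toReal) = fun ω => ‖f ω‖^2 := by
      funext ω
      rw [ENNReal.toReal_ofNat, show ((2:ℝ)) = ((2:ℕ):ℝ) by norm_num, Real.rpow_natCast]
    rw [← heq]
    exact h
  have I1 : Integrable (fun ω => ‖grayPhi p η δ J v ε α wneg w0 j ω‖^2) P := sqInt (hφLp j)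
  have I4 : Integrable (fun ω => ‖ε (j+1) ω‖^2) P := sqInt (hεL2 (j+1))
  have gradInt : ∀ n,
      Integrable (fun ω => ‖gradient J (grayW p η δ J v ε α wneg w0 n ω)‖^2) P := by
    intro n
    refine Integrable.mono' (integrable_const (M^2))
      ((hgcont.measurable.comp
        (grayBox_meas_grayW hJcont hgcont hvmeas hεm n)).norm.pow_const 2).aestronglyMeasurable ?_
    refine Filter.Eventually.of_forall fun ω => ?_
    rw [Real.norm_eq_abs, abs_of_nonneg (by positivity)]
    exact pow_le_pow_left₀ (norm_nonneg _) (hgradbd _) 2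
  have I2 := gradInt (j+2)
  have I3 := gradInt (j+1)
  have ha0 : 0 ≤ α (j+1) := (hα (j+1)).1
  have ha1 : α (j+1) ≤ 1 := (hα (j+1)).2
  have hptw : ∀ᵐ ω ∂P, ‖grayPhi p η δ J v ε α wneg w0 (j+1) ω‖^2 ≤
      (4 * (1 - α (j+1)) ^ 2 / δ ^ 2) * (p:ℝ) ^ 2 * M ^ 2 * η ^ 2
          * ‖grayPhi p η δ J v ε α wneg w0 j ω‖^2
        + 8 * α (j+1) ^ 2 * ‖gradient J (grayW p η δ J v ε α wneg w0 (j+2) ω)‖^2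
        + 48 * (1 - α (j+1)) ^ 2 * (p:ℝ) ^ 2
          * ‖gradient J (grayW p η δ J v ε α wneg w0 (j+1) ω)‖^2
        + 4 * α (j+1) ^ 2 * ‖ε (j+1) ω‖^2
        + (8 * α (j+1) ^ 2 * L ^ 2 * δ ^ 2
            + 6 * (1 - α (j+1)) ^ 2 * L ^ 2 * (p:ℝ) ^ 2 * δ ^ 2) := by
    filter_upwards [hvnorm (j+1), hvnorm (j+2)] with ω h1 h2
    have h := grayBox_pointwise J M L hM hL hdiff hglip hgradbd hJlipabs hgradlipabs
      (p:ℝ) δ η (α (j+1)) (Nat.cast_nonneg p) hδ hη.le ha0 ha1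
      (grayW p η δ J v ε α wneg w0 (j+1) ω) (v (j+2) ω) (v (j+1) ω)
      (grayPhi p η δ J v ε α wneg w0 j ω) (ε (j+1) ω) h2 h1
    calc ‖grayPhi p η δ J v ε α wneg w0 (j+1) ω‖^2
        = ‖α (j+1) • (gradient J ((grayW p η δ J v ε α wneg w0 (j+1) ω
              - η • grayPhi p η δ J v ε α wneg w0 j ω) + δ • v (j+2) ω) - ε (j+1) ω)
            + (1 - α (j+1)) • (((p:ℝ)/δ * (J ((grayW p η δ J v ε α wneg w0 (j+1) ω
              - η • grayPhi p η δ J v ε α wneg w0 j ω) + δ • v (j+2) ω)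
              - J (grayW p η δ J v ε α wneg w0 (j+1) ω + δ • v (j+1) ω))) • v (j+2) ω)‖^2 :=
          rfl
      _ ≤ (4*(1 - α (j+1))^2/δ^2) * (p:ℝ)^2 * M^2 * η^2
            * ‖grayPhi p η δ J v ε α wneg w0 j ω‖^2
          + 8*(α (j+1))^2*‖gradient J (grayW p η δ J v ε α wneg w0 (j+1) ω
              - η • grayPhi p η δ J v ε α wneg w0 j ω)‖^2
          + 48*(1 - α (j+1))^2*(p:ℝ)^2*‖gradient J (grayW p η δ J v ε α wneg w0 (j+1) ω)‖^2
          + 4*(α (j+1))^2*‖ε (j+1) ω‖^2 + 8*(α (j+1))^2*L^2*δ^2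
          + 6*(1 - α (j+1))^2*L^2*(p:ℝ)^2*δ^2 := h
      _ = (4 * (1 - α (j+1)) ^ 2 / δ ^ 2) * (p:ℝ) ^ 2 * M ^ 2 * η ^ 2
            * ‖grayPhi p η δ J v ε α wneg w0 j ω‖^2
          + 8 * α (j+1) ^ 2 * ‖gradient J (grayW p η δ J v ε α wneg w0 (j+2) ω)‖^2
          + 48 * (1 - α (j+1)) ^ 2 * (p:ℝ) ^ 2
            * ‖gradient J (grayW p η δ J v ε α wneg w0 (j+1) ω)‖^2
          + 4 * α (j+1) ^ 2 * ‖ε (j+1) ω‖^2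
          + (8 * α (j+1) ^ 2 * L ^ 2 * δ ^ 2
              + 6 * (1 - α (j+1)) ^ 2 * L ^ 2 * (p:ℝ) ^ 2 * δ ^ 2) := by
          have hWre : grayW p η δ J v ε α wneg w0 (j+2) ω
              = grayW p η δ J v ε α wneg w0 (j+1) ω
                - η • grayPhi p η δ J v ε α wneg w0 j ω := by
            rw [grayBox_grayW_succ_succ]
          rw [hWre]
          ring
  have hGint : Integrable (fun ω =>
      (4 * (1 - α (j+1)) ^ 2 / δ ^ 2) * (p:ℝ) ^ 2 * M ^ 2 * η ^ 2
          * ‖grayPhi p η δ J v ε α wneg w0 j ω‖^2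
        + 8 * α (j+1) ^ 2 * ‖gradient J (grayW p η δ J v ε α wneg w0 (j+2) ω)‖^2
        + 48 * (1 - α (j+1)) ^ 2 * (p:ℝ) ^ 2
          * ‖gradient J (grayW p η δ J v ε α wneg w0 (j+1) ω)‖^2
        + 4 * α (j+1) ^ 2 * ‖ε (j+1) ω‖^2
        + (8 * α (j+1) ^ 2 * L ^ 2 * δ ^ 2
            + 6 * (1 - α (j+1)) ^ 2 * L ^ 2 * (p:ℝ) ^ 2 * δ ^ 2)) P := by
    exact (((((I1.const_mul _).add (I2.const_mul _)).add (I3.const_mul _)).add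
      (I4.const_mul _)).add (integrable_const _))
  have T1 : Integrable (fun ω =>
      4 * (1 - α (j+1)) ^ 2 / δ ^ 2 * (p:ℝ) ^ 2 * M ^ 2 * η ^ 2
        * ‖grayPhi p η δ J v ε α wneg w0 j ω‖^2) P := I1.const_mul _
  have T2 : Integrable (fun ω =>
      8 * α (j+1) ^ 2 * ‖gradient J (grayW p η δ J v ε α wneg w0 (j+2) ω)‖^2) P :=
    I2.const_mul _
  have T3 : Integrable (fun ω =>
      48 * (1 - α (j+1)) ^ 2 * (p:ℝ) ^ 2
        * ‖gradient J (grayW p η δ J v ε α wneg w0 (j+1) ω)‖^2) P := I3.const_mul _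
  have T4 : Integrable (fun ω => 4 * α (j+1) ^ 2 * ‖ε (j+1) ω‖^2) P := I4.const_mul _
  have T12 : Integrable (fun ω =>
      4 * (1 - α (j+1)) ^ 2 / δ ^ 2 * (p:ℝ) ^ 2 * M ^ 2 * η ^ 2
          * ‖grayPhi p η δ J v ε α wneg w0 j ω‖^2
        + 8 * α (j+1) ^ 2 * ‖gradient J (grayW p η δ J v ε α wneg w0 (j+2) ω)‖^2) P :=
    T1.add T2
  have T123 : Integrable (fun ω =>
      4 * (1 - α (j+1)) ^ 2 / δ ^ 2 * (p:ℝ) ^ 2 * M ^ 2 * η ^ 2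
          * ‖grayPhi p η δ J v ε α wneg w0 j ω‖^2
        + 8 * α (j+1) ^ 2 * ‖gradient J (grayW p η δ J v ε α wneg w0 (j+2) ω)‖^2
        + 48 * (1 - α (j+1)) ^ 2 * (p:ℝ) ^ 2
          * ‖gradient J (grayW p η δ J v ε α wneg w0 (j+1) ω)‖^2) P := T12.add T3
  have T1234 : Integrable (fun ω =>
      4 * (1 - α (j+1)) ^ 2 / δ ^ 2 * (p:ℝ) ^ 2 * M ^ 2 * η ^ 2
          * ‖grayPhi p η δ J v ε α wneg w0 j ω‖^2
        + 8 * α (j+1) ^ 2 * ‖gradient J (grayW p η δ J v ε α wneg w0 (j+2) ω)‖^2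
        + 48 * (1 - α (j+1)) ^ 2 * (p:ℝ) ^ 2
          * ‖gradient J (grayW p η δ J v ε α wneg w0 (j+1) ω)‖^2
        + 4 * α (j+1) ^ 2 * ‖ε (j+1) ω‖^2) P := T123.add T4
  have hmono := integral_mono_of_nonneg
    (Filter.Eventually.of_forall fun ω => by positivity) hGint hptw
  refine hmono.trans (le_of_eq ?_)
  rw [integral_add T1234 (integrable_const _), integral_add T123 T4, integral_add T12 T3,
    integral_add T1 T2, integral_const_mul, integral_const_mul, integral_const_mul,
    integral_const_mul, integral_const]
  simp only [measure_univ, probReal_univ, ENNReal.toReal_one, smul_eq_mul, one_mul]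
  ring
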